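/- Procedure 1 (the directional fixed sequence procedure with critical constants α_i = α/2^{i−1}) strongly controls the mdFWER at level α under arbitrary dependence: for every n, every configuration of parameters θ_1,…,θ_n ∈ ℝ, and every joint distribution of (T_1,…,T_n) whose marginals satisfy the stated assumptions, mdFWER ≤ α. -/

import Mathlib

open MeasureTheory ProbabilityTheory Filter Topology

lemma auxPr_toReal_mono {Ω : Type*} [MeasurableSpace Ω] (Pr : Measure Ω) [IsProbabilityMeasure Pr]
    {s t : Set Ω} (h : s ⊆ t) : (Pr s).toReal ≤ (Pr t).toReal :=
  ENNReal.toReal_mono (measure_ne_top _ _) (measure_mono h)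

lemma auxPr_lt {Ω : Type*} [MeasurableSpace Ω] (Pr : Measure Ω) [IsProbabilityMeasure Pr]
    (T : Ω → ℝ) (G : ℝ → ℝ) (hG : Continuous G)
    (hcdf : ∀ x, (Pr {ω | T ω ≤ x}).toReal = G x) (x : ℝ) :
    (Pr {ω | T ω < x}).toReal = G x := by
  apply le_antisymm
  · rw [← hcdf x]
    exact auxPr_toReal_mono Pr fun ω h => le_of_lt (show T ω < x from h)
  · have hx : Tendsto (fun k : ℕ => x - 1 / (k + 1 : ℝ)) atTop (𝓝 x) := by
      simpa using tendsto_const_nhds.sub (tendsto_one_div_add_atTop_nhds_zero_nat :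
        Tendsto (fun n : ℕ => 1 / ((n : ℝ) + 1)) atTop (𝓝 0))
    have h1 : Tendsto (fun k : ℕ => G (x - 1 / (k + 1 : ℝ))) atTop (𝓝 (G x)) :=
      (hG.tendsto x).comp hx
    refine le_of_tendsto h1 (Filter.Eventually.of_forall fun k => ?_)
    rw [← hcdf]
    refine auxPr_toReal_mono Pr fun ω (h : T ω ≤ x - 1 / (k + 1 : ℝ)) => ?_
    have : (0:ℝ) < 1 / (k + 1 : ℝ) := by positivity
    exact lt_of_le_of_lt h (by linarith)

lemma auxPr_ge {Ω : Type*} [MeasurableSpace Ω] (Pr : Measure Ω) [IsProbabilityMeasure Pr]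
    (T : Ω → ℝ) (hT : Measurable T) (G : ℝ → ℝ) (hG : Continuous G)
    (hcdf : ∀ x, (Pr {ω | T ω ≤ x}).toReal = G x) (x : ℝ) :
    (Pr {ω | x ≤ T ω}).toReal = 1 - G x := by
  have hset : {ω | x ≤ T ω} = {ω | T ω < x}ᶜ := by
    ext ω; simp [not_lt]
  have hms : MeasurableSet {ω | T ω < x} := measurableSet_lt hT measurable_const
  rw [hset, measure_compl hms (measure_ne_top _ _), measure_univ,
    ENNReal.toReal_sub_of_le prob_le_one ENNReal.one_ne_top, ENNReal.toReal_one,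
    auxPr_lt Pr T G hG hcdf x]

lemma auxPr_top {Ω : Type*} [MeasurableSpace Ω] (Pr : Measure Ω) [IsProbabilityMeasure Pr]
    (T : Ω → ℝ) :
    Tendsto (fun k : ℕ => (Pr {ω | T ω ≤ (k : ℝ)}).toReal) atTop (𝓝 1) := by
  have hm : Monotone (fun k : ℕ => {ω | T ω ≤ (k : ℝ)}) := by
    intro a b hab ω (h : T ω ≤ a)
    exact h.trans (by exact_mod_cast Nat.cast_le.mpr hab)
  have hU : (⋃ k : ℕ, {ω | T ω ≤ (k : ℝ)}) = Set.univ := by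
    ext ω; simp only [Set.mem_iUnion, Set.mem_univ, iff_true]
    obtain ⟨k, hk⟩ := exists_nat_ge (T ω)
    exact ⟨k, hk⟩
  have := tendsto_measure_iUnion_atTop (μ := Pr) hm
  rw [hU, measure_univ] at this
  have h2 := (ENNReal.tendsto_toReal ENNReal.one_ne_top).comp this
  simpa [Function.comp_def] using h2

lemma auxPr_bot {Ω : Type*} [MeasurableSpace Ω] (Pr : Measure Ω) [IsProbabilityMeasure Pr]
    (T : Ω → ℝ) (hT : Measurable T) :
    Tendsto (fun k : ℕ => (Pr {ω | T ω ≤ -(k : ℝ)}).toReal) atTop (𝓝 0) := by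
  have hm : Antitone (fun k : ℕ => {ω | T ω ≤ -(k : ℝ)}) := by
    intro a b hab ω (h : T ω ≤ -b)
    refine h.trans ?_
    simp only [neg_le_neg_iff]
    exact_mod_cast hab
  have hI : (⋂ k : ℕ, {ω | T ω ≤ -(k : ℝ)}) = ∅ := by
    ext ω; simp only [Set.mem_iInter, Set.mem_empty_iff_false, iff_false, not_forall]
    obtain ⟨k, hk⟩ := exists_nat_gt (-T ω)
    exact ⟨k, by simp only [Set.mem_setOf_eq, not_le]; linarith⟩
  have := tendsto_measure_iInter_atTop (μ := Pr)
    (fun k => (measurableSet_le hT measurable_const).nullMeasurableSet) hm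
    ⟨0, measure_ne_top _ _⟩
  rw [hI, measure_empty] at this
  have h2 := (ENNReal.tendsto_toReal (ENNReal.zero_ne_top)).comp this
  simpa [Function.comp_def] using h2

lemma aux_quantile (F0 G : ℝ → ℝ) (hc : Continuous F0) (hs : StrictMono F0)
    (hsym : ∀ x, F0 (-x) = 1 - F0 x)
    (hGtop : Tendsto (fun k : ℕ => G (k : ℝ)) atTop (𝓝 1))
    (hGbot : Tendsto (fun k : ℕ => G (-(k : ℝ))) atTop (𝓝 0))
    (hcmp : (∀ x, G x ≤ F0 x) ∨ (∀ x, F0 x ≤ G x))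
    {t : ℝ} (ht : 0 < t) (ht1 : t < 1) : ∃ c, F0 c = t := by
  have key : ∀ ε : ℝ, 0 < ε → ∃ x : ℝ, 1 - ε < F0 x := by
    intro ε hε
    rcases hcmp with hle | hge
    · have : ∀ᶠ k : ℕ in atTop, 1 - ε < G (k : ℝ) :=
        (hGtop.eventually (eventually_gt_nhds (by linarith)))
      obtain ⟨k, hk⟩ := this.exists
      exact ⟨k, lt_of_lt_of_le hk (hle _)⟩
    · have : ∀ᶠ k : ℕ in atTop, G (-(k : ℝ)) < ε :=
        (hGbot.eventually (eventually_lt_nhds hε))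
      obtain ⟨k, hk⟩ := this.exists
      refine ⟨(k : ℝ), ?_⟩
      have h1 : F0 (-(k : ℝ)) < ε := lt_of_le_of_lt (hge _) hk
      have h2 := hsym (k : ℝ)
      linarith
  obtain ⟨b, hb⟩ := key (1 - t) (by linarith)
  obtain ⟨b', hb'⟩ := key t ht
  have ha : F0 (-b') < t := by have := hsym b'; linarith
  have hab : -b' < b := hs.lt_iff_lt.mp (by linarith)
  have := intermediate_value_Icc (le_of_lt hab) hc.continuousOn
  have htmem : t ∈ Set.Icc (F0 (-b')) (F0 b) := ⟨le_of_lt ha, by linarith⟩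
  obtain ⟨c, _, hcv⟩ := this htmem
  exact ⟨c, hcv⟩

lemma aux_null {Ω : Type*} [MeasurableSpace Ω] (Pr : Measure Ω) [IsProbabilityMeasure Pr]
    (F0 : ℝ → ℝ) (T : Ω → ℝ) (hT : Measurable T)
    (hc : Continuous F0) (hs : StrictMono F0) (hsym : ∀ x, F0 (-x) = 1 - F0 x)
    (hcdf0 : ∀ x, (Pr {ω | T ω ≤ x}).toReal = F0 x)
    (s c : ℝ) (hcq : F0 c = s / 2) :
    (Pr {ω | 2 * min (F0 (T ω)) (1 - F0 (T ω)) ≤ s}).toReal ≤ s := by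
  have hsub : {ω | 2 * min (F0 (T ω)) (1 - F0 (T ω)) ≤ s}
      ⊆ {ω | T ω ≤ c} ∪ {ω | -c ≤ T ω} := by
    intro ω hω
    have h2 : min (F0 (T ω)) (1 - F0 (T ω)) ≤ s / 2 := by
      have := hω; simp only [Set.mem_setOf_eq] at this; linarith
    rcases min_le_iff.mp h2 with h | h
    · left
      exact hs.le_iff_le.mp (by rw [hcq]; exact h)
    · right
      have hnc : F0 (-c) ≤ F0 (T ω) := by rw [hsym]; linarith
      have := hs.le_iff_le.mp hnc
      simpa using this
  calc (Pr {ω | 2 * min (F0 (T ω)) (1 - F0 (T ω)) ≤ s}).toReal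
      ≤ (Pr ({ω | T ω ≤ c} ∪ {ω | -c ≤ T ω})).toReal := auxPr_toReal_mono Pr hsub
    _ ≤ ((Pr {ω | T ω ≤ c}) + Pr {ω | -c ≤ T ω}).toReal :=
        ENNReal.toReal_mono (ENNReal.add_ne_top.mpr ⟨measure_ne_top _ _, measure_ne_top _ _⟩)
          (measure_union_le _ _)
    _ = (Pr {ω | T ω ≤ c}).toReal + (Pr {ω | -c ≤ T ω}).toReal :=
        ENNReal.toReal_add (measure_ne_top _ _) (measure_ne_top _ _)
    _ = s / 2 + (1 - F0 (-c)) := by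
        rw [hcdf0, hcq, auxPr_ge Pr T hT F0 hc hcdf0]
    _ = s := by rw [hsym]; linarith [hcq]

lemma aux_dir {Ω : Type*} [MeasurableSpace Ω] (Pr : Measure Ω) [IsProbabilityMeasure Pr]
    (F0 G : ℝ → ℝ) (T : Ω → ℝ) (hT : Measurable T)
    (hc : Continuous F0) (hs : StrictMono F0) (hsym : ∀ x, F0 (-x) = 1 - F0 x)
    (hGc : Continuous G)
    (hcdfG : ∀ x, (Pr {ω | T ω ≤ x}).toReal = G x)
    (θi : ℝ) (hθ : θi ≠ 0)
    (hle : 0 < θi → ∀ x, G x ≤ F0 x)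
    (hge : θi < 0 → ∀ x, F0 x ≤ G x)
    (s c : ℝ) (hcq : F0 c = s / 2) :
    (Pr {ω | θi * T ω < 0 ∧ 2 * min (F0 (T ω)) (1 - F0 (T ω)) ≤ s}).toReal ≤ s / 2 := by
  have hF00 : F0 0 = 1 / 2 := by have := hsym 0; simp at this; linarith
  rcases lt_or_gt_of_ne hθ with hneg | hpos
  · -- θi < 0 : T ω > 0 on the event
    have hsub : {ω | θi * T ω < 0 ∧ 2 * min (F0 (T ω)) (1 - F0 (T ω)) ≤ s}
        ⊆ {ω | -c ≤ T ω} := by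
      intro ω ⟨h1, h2⟩
      have hTpos : 0 < T ω := by
        by_contra h
        push_neg at h
        nlinarith
      have hFhalf : 1 / 2 < F0 (T ω) := by rw [← hF00]; exact hs hTpos
      have hminr : min (F0 (T ω)) (1 - F0 (T ω)) = 1 - F0 (T ω) :=
        min_eq_right (by linarith)
      rw [hminr] at h2
      have hnc : F0 (-c) ≤ F0 (T ω) := by rw [hsym]; linarith
      have := hs.le_iff_le.mp hnc
      simpa using this
    calc (Pr _).toReal ≤ (Pr {ω | -c ≤ T ω}).toReal := auxPr_toReal_mono Pr hsub
      _ = 1 - G (-c) := auxPr_ge Pr T hT G hGc hcdfG (-c)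
      _ ≤ 1 - F0 (-c) := by linarith [hge hneg (-c)]
      _ = s / 2 := by rw [hsym]; linarith [hcq]
  · -- θi > 0 : T ω < 0 on the event
    have hsub : {ω | θi * T ω < 0 ∧ 2 * min (F0 (T ω)) (1 - F0 (T ω)) ≤ s}
        ⊆ {ω | T ω ≤ c} := by
      intro ω ⟨h1, h2⟩
      have hTneg : T ω < 0 := by
        by_contra h
        push_neg at h
        nlinarith
      have hFhalf : F0 (T ω) < 1 / 2 := by rw [← hF00]; exact hs hTneg
      have hminl : min (F0 (T ω)) (1 - F0 (T ω)) = F0 (T ω) :=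
        min_eq_left (by linarith)
      rw [hminl] at h2
      exact hs.le_iff_le.mp (by rw [hcq]; linarith)
    calc (Pr _).toReal ≤ (Pr {ω | T ω ≤ c}).toReal := auxPr_toReal_mono Pr hsub
      _ = G c := hcdfG c
      _ ≤ F0 c := hle hpos c
      _ = s / 2 := hcq

lemma aux_geom (α : ℝ) : ∀ N : ℕ, (∑ k ∈ Finset.range N, α / 2 ^ (k + 1)) = α - α / 2 ^ N := by
  intro N
  induction N with
  | zero => simp
  | succ m ih =>
      rw [Finset.sum_range_succ, ih]
      have h : (2:ℝ) ^ (m + 1) = 2 * 2 ^ m := by ring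
      field_simp
      ring

lemma aux_fin_sum {n : ℕ} (i0 : Fin n) (f : ℕ → ℝ) :
    ∑ j ∈ Finset.Iio i0, f (j : ℕ) = ∑ k ∈ Finset.range (i0 : ℕ), f k := by
  have himg : (Finset.Iio i0).image Fin.val = Finset.range (i0 : ℕ) := by
    ext k
    simp only [Finset.mem_image, Finset.mem_range, Finset.mem_Iio]
    constructor
    · rintro ⟨j, hj, rfl⟩; exact hj
    · intro hk
      exact ⟨⟨k, lt_trans hk i0.isLt⟩, by simpa [Fin.lt_def] using hk, rfl⟩
  rw [← himg, Finset.sum_image (fun a _ b _ h => Fin.val_injective h)]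

/-- Procedure 1 (directional fixed sequence procedure with critical
constants α_i = α/2^(i-1)) strongly controls the mdFWER at level α under arbitrary
dependence of the test statistics. -/
theorem procedure1_controls_mdFWER_arbitrary_dependence
    {Ω : Type*} [MeasurableSpace Ω] (Pr : Measure Ω) [IsProbabilityMeasure Pr]
    (F : ℝ → ℝ → ℝ)
    (hFcont : ∀ θ, Continuous (F θ))
    (hFmono : ∀ θ, Monotone (F θ))
    (hF0strict : StrictMono (F 0))
    (hFsym : ∀ x : ℝ, F 0 (-x) = 1 - F 0 x)
    (hstoch : ∀ θ θ' : ℝ, θ ≤ θ' → ∀ x, F θ' x ≤ F θ x)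
    (n : ℕ) (θ : Fin n → ℝ) (T : Fin n → Ω → ℝ)
    (hT : ∀ i, Measurable (T i))
    (hcdf : ∀ i x, (Pr {ω | T i ω ≤ x}).toReal = F (θ i) x)
    (α : ℝ) (hα : α ∈ Set.Ioo (0 : ℝ) 1) :
    (Pr {ω | ∃ i : Fin n,
        (∀ j : Fin n, j ≤ i →
          2 * min (F 0 (T j ω)) (1 - F 0 (T j ω)) ≤ α / 2 ^ (j : ℕ)) ∧
        (θ i = 0 ∨ (θ i ≠ 0 ∧ θ i * T i ω < 0))}).toReal ≤ α := by
  classical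
  obtain ⟨hα0, hα1⟩ := hα
  -- quantile function of F 0
  have hquant : ∀ (i : Fin n) (t : ℝ), 0 < t → t < 1 → ∃ c, F 0 c = t := by
    intro i t ht ht1
    refine aux_quantile (F 0) (F (θ i)) (hFcont 0) hF0strict hFsym ?_ ?_ ?_ ht ht1
    · have h := auxPr_top Pr (T i)
      simp only [hcdf i] at h; exact h
    · have h := auxPr_bot Pr (T i) (hT i)
      simp only [hcdf i] at h; exact h
    · rcases le_total (θ i) 0 with h | h
      · right; exact hstoch (θ i) 0 h
      · left; exact hstoch 0 (θ i) h
  have halpha : ∀ k : ℕ, 0 < α / 2 ^ k ∧ α / 2 ^ k < 1 := by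
    intro k
    constructor
    · positivity
    · have h1 : (1:ℝ) ≤ 2 ^ k := one_le_pow₀ (by norm_num)
      have := div_le_self hα0.le h1
      linarith
  -- per-index bounds
  have hA : ∀ i : Fin n, θ i = 0 →
      (Pr {ω | 2 * min (F 0 (T i ω)) (1 - F 0 (T i ω)) ≤ α / 2 ^ (i : ℕ)}).toReal
        ≤ α / 2 ^ (i : ℕ) := by
    intro i hi0
    obtain ⟨h0, h1⟩ := halpha (i : ℕ)
    obtain ⟨c, hc⟩ := hquant i ((α / 2 ^ (i : ℕ)) / 2) (by positivity) (by linarith)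
    refine aux_null Pr (F 0) (T i) (hT i) (hFcont 0) hF0strict hFsym ?_ _ c hc
    intro x
    rw [hcdf i x, hi0]
  have hB : ∀ i : Fin n, θ i ≠ 0 →
      (Pr {ω | θ i * T i ω < 0 ∧
        2 * min (F 0 (T i ω)) (1 - F 0 (T i ω)) ≤ α / 2 ^ (i : ℕ)}).toReal
        ≤ (α / 2 ^ (i : ℕ)) / 2 := by
    intro i hi0
    obtain ⟨h0, h1⟩ := halpha (i : ℕ)
    obtain ⟨c, hc⟩ := hquant i ((α / 2 ^ (i : ℕ)) / 2) (by positivity) (by linarith)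
    refine aux_dir Pr (F 0) (F (θ i)) (T i) (hT i) (hFcont 0) hF0strict hFsym
      (hFcont (θ i)) (hcdf i) (θ i) hi0
      (fun h x => hstoch 0 (θ i) h.le x) (fun h x => hstoch (θ i) 0 h.le x) _ c hc
  set B : Fin n → Set Ω := fun j =>
    {ω | θ j * T j ω < 0 ∧ 2 * min (F 0 (T j ω)) (1 - F 0 (T j ω)) ≤ α / 2 ^ (j : ℕ)}
    with hBdef
  by_cases hex : ∃ i : Fin n, θ i = 0
  · -- there is a null hypothesis; let i0 be the first one
    set s0 : Finset (Fin n) := Finset.univ.filter (fun i => θ i = 0) with hs0def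
    have hs0ne : s0.Nonempty := ⟨hex.choose, by simp [hs0def, hex.choose_spec]⟩
    set i0 := s0.min' hs0ne with hi0def
    have hi0null : θ i0 = 0 := by
      have := s0.min'_mem hs0ne
      simp only [hs0def, Finset.mem_filter] at this
      exact this.2
    have hmin : ∀ j : Fin n, j < i0 → θ j ≠ 0 := by
      intro j hj hjn
      exact absurd (s0.min'_le j (by simp [hs0def, hjn])) (not_le.mpr hj)
    set A : Set Ω :=
      {ω | 2 * min (F 0 (T i0 ω)) (1 - F 0 (T i0 ω)) ≤ α / 2 ^ (i0 : ℕ)} with hAdef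
    have hcov : {ω | ∃ i : Fin n,
        (∀ j : Fin n, j ≤ i →
          2 * min (F 0 (T j ω)) (1 - F 0 (T j ω)) ≤ α / 2 ^ (j : ℕ)) ∧
        (θ i = 0 ∨ (θ i ≠ 0 ∧ θ i * T i ω < 0))}
        ⊆ A ∪ ⋃ j ∈ Finset.Iio i0, B j := by
      rintro ω ⟨i, hpass, herr⟩
      by_cases hle : i0 ≤ i
      · exact Or.inl (hpass i0 hle)
      · push_neg at hle
        rcases herr with h0 | ⟨_, h3⟩
        · exact absurd h0 (hmin i hle)
        · exact Or.inr (Set.mem_biUnion (Finset.mem_Iio.mpr hle) ⟨h3, hpass i le_rfl⟩)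
    have hsumne : ∑ j ∈ Finset.Iio i0, Pr (B j) ≠ ⊤ :=
      (ENNReal.sum_lt_top.mpr (fun j _ => measure_lt_top _ _)).ne
    calc (Pr {ω | ∃ i : Fin n,
        (∀ j : Fin n, j ≤ i →
          2 * min (F 0 (T j ω)) (1 - F 0 (T j ω)) ≤ α / 2 ^ (j : ℕ)) ∧
        (θ i = 0 ∨ (θ i ≠ 0 ∧ θ i * T i ω < 0))}).toReal
        ≤ (Pr (A ∪ ⋃ j ∈ Finset.Iio i0, B j)).toReal := auxPr_toReal_mono Pr hcov
      _ ≤ (Pr A + ∑ j ∈ Finset.Iio i0, Pr (B j)).toReal := by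
          refine ENNReal.toReal_mono (ENNReal.add_ne_top.mpr ⟨measure_ne_top _ _, hsumne⟩) ?_
          exact (measure_union_le _ _).trans
            (add_le_add le_rfl (measure_biUnion_finset_le _ _))
      _ = (Pr A).toReal + ∑ j ∈ Finset.Iio i0, (Pr (B j)).toReal := by
          rw [ENNReal.toReal_add (measure_ne_top _ _) hsumne,
            ENNReal.toReal_sum (fun j _ => measure_ne_top _ _)]
      _ ≤ α / 2 ^ (i0 : ℕ) + ∑ j ∈ Finset.Iio i0, (α / 2 ^ (j : ℕ)) / 2 := by
          refine add_le_add (hA i0 hi0null) (Finset.sum_le_sum fun j hj => ?_)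
          exact hB j (hmin j (Finset.mem_Iio.mp hj))
      _ = α / 2 ^ (i0 : ℕ) + ∑ k ∈ Finset.range (i0 : ℕ), α / 2 ^ (k + 1) := by
          rw [aux_fin_sum i0 (fun k => (α / 2 ^ k) / 2)]
          congr 1
          refine Finset.sum_congr rfl fun k _ => ?_
          rw [pow_succ]
          ring
      _ = α := by rw [aux_geom]; ring
  · -- no null hypothesis
    push_neg at hex
    have hcov : {ω | ∃ i : Fin n,
        (∀ j : Fin n, j ≤ i →
          2 * min (F 0 (T j ω)) (1 - F 0 (T j ω)) ≤ α / 2 ^ (j : ℕ)) ∧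
        (θ i = 0 ∨ (θ i ≠ 0 ∧ θ i * T i ω < 0))}
        ⊆ ⋃ j ∈ (Finset.univ : Finset (Fin n)), B j := by
      rintro ω ⟨i, hpass, herr⟩
      rcases herr with h0 | ⟨_, h3⟩
      · exact absurd h0 (hex i)
      · exact Set.mem_biUnion (Finset.mem_univ i) ⟨h3, hpass i le_rfl⟩
    have hsumne : ∑ j ∈ (Finset.univ : Finset (Fin n)), Pr (B j) ≠ ⊤ :=
      (ENNReal.sum_lt_top.mpr (fun j _ => measure_lt_top _ _)).ne
    calc (Pr {ω | ∃ i : Fin n,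
        (∀ j : Fin n, j ≤ i →
          2 * min (F 0 (T j ω)) (1 - F 0 (T j ω)) ≤ α / 2 ^ (j : ℕ)) ∧
        (θ i = 0 ∨ (θ i ≠ 0 ∧ θ i * T i ω < 0))}).toReal
        ≤ (Pr (⋃ j ∈ (Finset.univ : Finset (Fin n)), B j)).toReal :=
          auxPr_toReal_mono Pr hcov
      _ ≤ (∑ j ∈ (Finset.univ : Finset (Fin n)), Pr (B j)).toReal :=
          ENNReal.toReal_mono hsumne (measure_biUnion_finset_le _ _)
      _ = ∑ j ∈ (Finset.univ : Finset (Fin n)), (Pr (B j)).toReal :=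
          ENNReal.toReal_sum (fun j _ => measure_ne_top _ _)
      _ ≤ ∑ j ∈ (Finset.univ : Finset (Fin n)), (α / 2 ^ (j : ℕ)) / 2 :=
          Finset.sum_le_sum fun j _ => hB j (hex j)
      _ = ∑ k ∈ Finset.range n, α / 2 ^ (k + 1) := by
          rw [Fin.sum_univ_eq_sum_range (fun k => (α / 2 ^ k) / 2)]
          refine Finset.sum_congr rfl fun k _ => ?_
          rw [pow_succ]
          ring
      _ = α - α / 2 ^ n := aux_geom α n
      _ ≤ α := by
          have : (0:ℝ) < α / 2 ^ n := by positivity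
          linarith
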